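/- For fixed a, b ∈ ℂ, the ratio Γ(z+a)/Γ(z+b) is asymptotic to z^(a-b) as z → ∞ along the positive real axis; i.e., Γ(z+a)/(Γ(z+b)·z^(a-b)) → 1 as z → +∞. -/

import Mathlib

open Complex Filter MeasureTheory Set
open scoped Topology

namespace Stmt4Aux

noncomputable def F (a : ℂ) (x : ℝ) : ℝ → ℂ :=
  Set.indicator (Set.Ioc 0 x)
    (fun u : ℝ => (1 - (u : ℂ) / (x : ℂ)) ^ ((x : ℂ) - 1) * (u : ℂ) ^ (a - 1))

lemma integral_F (a : ℂ) {x : ℝ} (hx : 0 < x) :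
    ∫ u in Ioi (0 : ℝ), F a x u = (x : ℂ) ^ a * Complex.betaIntegral x a := by
  have hxC : (x : ℂ) ≠ 0 := ofReal_ne_zero.mpr hx.ne'
  have hpow_ne : (x : ℂ) ^ ((x : ℂ) - 1) ≠ 0 := by
    simp only [ne_eq, Complex.cpow_eq_zero_iff, hxC, false_and, not_false_eq_true]
  have hscaled := Complex.betaIntegral_scaled a x hx
  have hcongr : ∫ u in (0:ℝ)..x, (u:ℂ) ^ (a - 1) * ((x:ℂ) - (u:ℂ)) ^ ((x:ℂ) - 1)
      = ∫ u in (0:ℝ)..x, (x:ℂ) ^ ((x:ℂ) - 1) *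
          ((1 - (u:ℂ)/(x:ℂ)) ^ ((x:ℂ) - 1) * (u:ℂ) ^ (a - 1)) := by
    apply intervalIntegral.integral_congr
    intro u hu
    rw [uIcc_of_le hx.le] at hu
    have h1 : (0:ℝ) ≤ 1 - u / x := by
      rw [sub_nonneg]
      exact (div_le_one hx).2 hu.2
    have hr : ((x:ℂ) - (u:ℂ)) = (x:ℂ) * ((1 - u/x : ℝ) : ℂ) := by
      push_cast
      field_simp
    simp only
    rw [hr, Complex.mul_cpow_ofReal_nonneg hx.le h1]
    push_cast
    ring
  rw [hcongr, intervalIntegral.integral_const_mul] at hscaled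
  have hI : ∫ u in (0:ℝ)..x, (1 - (u:ℂ)/(x:ℂ)) ^ ((x:ℂ) - 1) * (u:ℂ) ^ (a - 1)
      = (x:ℂ) ^ a * Complex.betaIntegral x a := by
    have hsplit : (x:ℂ) ^ (a + (x:ℂ) - 1) = (x:ℂ) ^ a * (x:ℂ) ^ ((x:ℂ) - 1) := by
      rw [show a + (x:ℂ) - 1 = a + ((x:ℂ) - 1) by ring, Complex.cpow_add _ _ hxC]
    rw [hsplit, Complex.betaIntegral_symm] at hscaled
    exact mul_left_cancel₀ hpow_ne (hscaled.trans (by ring))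
  rw [show F a x = Set.indicator (Set.Ioc 0 x)
    (fun u : ℝ => (1 - (u : ℂ) / (x : ℂ)) ^ ((x : ℂ) - 1) * (u : ℂ) ^ (a - 1)) from rfl,
    MeasureTheory.integral_indicator measurableSet_Ioc,
    Measure.restrict_restrict measurableSet_Ioc,
    inter_eq_left.mpr Ioc_subset_Ioi_self, ← intervalIntegral.integral_of_le hx.le]
  exact hI

lemma real_limit (u : ℝ) :
    Tendsto (fun x : ℝ => (1 - u / x) ^ (x - 1)) atTop (𝓝 (Real.exp (-u))) := by
  have h1 := Real.tendsto_one_add_div_rpow_exp (-u)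
  have h2 : Tendsto (fun x : ℝ => 1 + (-u) / x) atTop (𝓝 1) := by
    have : Tendsto (fun x : ℝ => (-u) / x) atTop (𝓝 0) :=
      tendsto_const_nhds.div_atTop tendsto_id
    simpa using tendsto_const_nhds.add this
  have h3 := h1.div h2 one_ne_zero
  rw [div_one] at h3
  apply h3.congr'
  filter_upwards [eventually_gt_atTop |u|, eventually_gt_atTop 0] with x hxu hx0
  have hpos : 0 < 1 + (-u) / x := by
    rw [neg_div, ← sub_eq_add_neg, sub_pos]
    exact (div_lt_one hx0).2 ((le_abs_self u).trans_lt hxu)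
  have : (1 - u / x) ^ (x - 1) = (1 + -u / x) ^ x / (1 + -u / x) ^ (1:ℝ) := by
    rw [← Real.rpow_sub hpos, neg_div, ← sub_eq_add_neg]
  simp only [Pi.div_apply, this, Real.rpow_one]

lemma contAt_cpow (t₀ : ℝ) (c : ℂ) (h : 0 < c.re ∨ t₀ ≠ 0) :
    ContinuousAt (fun t : ℝ => (t : ℂ) ^ c) t₀ := by
  have h1 := continuousAt_ofReal_cpow t₀ c h
  have h2 : ContinuousAt (fun t : ℝ => ((t : ℝ), c)) t₀ :=
    (continuous_id.prodMk continuous_const).continuousAt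
  have h3 := ContinuousAt.comp (f := fun t : ℝ => ((t : ℝ), c)) (x := t₀) h1 h2
  exact h3

lemma tendsto_integral_F (a : ℂ) (ha : 0 < a.re) :
    Tendsto (fun x : ℝ => ∫ u in Ioi (0 : ℝ), F a x u) atTop
      (𝓝 (Complex.GammaIntegral a)) := by
  have hGI : Complex.GammaIntegral a
      = ∫ u in Ioi (0:ℝ), ((Real.exp (-u) : ℝ) : ℂ) * (u:ℂ) ^ (a - 1) := rfl
  rw [hGI]
  apply MeasureTheory.tendsto_integral_filter_of_dominated_convergence
    (fun u : ℝ => Real.exp (-u/2) * u ^ (a.re - 1))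
  · -- measurability
    filter_upwards [eventually_ge_atTop (2:ℝ)] with x hx2
    rw [F, aestronglyMeasurable_indicator_iff measurableSet_Ioc,
      Measure.restrict_restrict measurableSet_Ioc,
      inter_eq_left.mpr Ioc_subset_Ioi_self]
    apply ContinuousOn.aestronglyMeasurable _ measurableSet_Ioc
    apply ContinuousOn.mul
    · intro u hu
      apply ContinuousAt.continuousWithinAt
      have hc : ContinuousAt (fun t : ℝ => (t:ℂ) ^ ((x:ℂ) - 1)) (1 - u / x) := by
        apply contAt_cpow
        left
        simp only [Complex.sub_re, Complex.ofReal_re, Complex.one_re]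
        linarith
      have := hc.comp (f := fun u : ℝ => 1 - u / x) (x := u) (by fun_prop)
      apply this.congr
      filter_upwards with v
      simp only [Function.comp_apply]
      congr 1
      push_cast
      ring
    · intro u hu
      apply ContinuousAt.continuousWithinAt
      exact contAt_cpow u _ (Or.inr hu.1.ne')
  · -- bound
    filter_upwards [eventually_ge_atTop (2:ℝ)] with x hx2
    rw [ae_restrict_iff' measurableSet_Ioi]
    filter_upwards with u hu
    have hu0 : (0:ℝ) < u := hu
    have hbd_nonneg : 0 ≤ Real.exp (-u/2) * u ^ (a.re - 1) := by positivity
    rw [F]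
    by_cases hmem : u ∈ Set.Ioc (0:ℝ) x
    · rw [Set.indicator_of_mem hmem]
      rw [norm_mul]
      have h2 : ‖(u:ℂ) ^ (a - 1)‖ = u ^ (a.re - 1) := by
        rw [norm_cpow_eq_rpow_re_of_pos hu0]
        norm_num
      rw [h2]
      apply mul_le_mul_of_nonneg_right _ (Real.rpow_nonneg hu0.le _)
      have hcast : (1 - (u:ℂ)/(x:ℂ)) = ((1 - u/x : ℝ) : ℂ) := by push_cast; ring
      rw [hcast]
      rcases eq_or_lt_of_le hmem.2 with heq | hlt
      · have hz : ((1 - u/x : ℝ):ℂ) = 0 := by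
          rw [heq, div_self (by linarith : x ≠ 0)]
          norm_num
        have hne : ((x:ℂ) - 1) ≠ 0 := by
          intro h
          have := congrArg Complex.re h
          simp only [Complex.sub_re, Complex.ofReal_re, Complex.one_re, Complex.zero_re] at this
          linarith
        rw [hz, Complex.zero_cpow hne, norm_zero]
        positivity
      · have hb : 0 < 1 - u / x := by
          rw [sub_pos]
          exact (div_lt_one (by linarith)).2 hlt
        rw [norm_cpow_eq_rpow_re_of_pos hb]
        have hre : ((x:ℂ) - 1).re = x - 1 := by simp
        rw [hre]
        have hstep1 : (1 - u/x) ^ (x-1) ≤ (Real.exp (-(u/x))) ^ (x-1) := by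
          apply Real.rpow_le_rpow hb.le _ (by linarith)
          linarith [Real.add_one_le_exp (-(u/x))]
        have hstep2 : (Real.exp (-(u/x))) ^ (x-1) = Real.exp (-(u/x) * (x-1)) := by
          rw [Real.exp_mul]
        have hstep3 : Real.exp (-(u/x) * (x-1)) ≤ Real.exp (-u/2) := by
          apply Real.exp_le_exp.2
          rw [neg_div, neg_mul, neg_le_neg_iff, div_mul_eq_mul_div, le_div_iff₀ (by linarith)]
          nlinarith
        calc (1 - u/x) ^ (x-1) ≤ (Real.exp (-(u/x))) ^ (x-1) := hstep1
          _ = Real.exp (-(u/x) * (x-1)) := hstep2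
          _ ≤ Real.exp (-u/2) := hstep3
    · rw [Set.indicator_of_notMem hmem]
      simpa using hbd_nonneg
  · -- bound integrable
    have h0 : IntegrableOn (fun v : ℝ => Real.exp (-v) * v ^ (a.re - 1)) (Ioi 0) :=
      Real.GammaIntegral_convergent ha
    have h1 : IntegrableOn (fun u : ℝ =>
        Real.exp (-(2⁻¹*u)) * (2⁻¹*u) ^ (a.re - 1)) (Ioi 0) := by
      have := (integrableOn_Ioi_comp_mul_left_iff
        (fun v : ℝ => Real.exp (-v) * v ^ (a.re - 1)) 0 (by norm_num : (0:ℝ) < 2⁻¹)).2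
      rw [mul_zero] at this
      exact this h0
    have h2 : IntegrableOn (fun u : ℝ =>
        (2:ℝ) ^ (a.re - 1) * (Real.exp (-(2⁻¹*u)) * (2⁻¹*u) ^ (a.re - 1))) (Ioi 0) :=
      h1.const_mul _
    have heq : EqOn (fun u : ℝ =>
        (2:ℝ) ^ (a.re - 1) * (Real.exp (-(2⁻¹*u)) * (2⁻¹*u) ^ (a.re - 1)))
        (fun u : ℝ => Real.exp (-u/2) * u ^ (a.re - 1)) (Ioi 0) := by
      intro u hu
      have hu0 : (0:ℝ) < u := hu
      simp only
      rw [Real.mul_rpow (by norm_num) hu0.le]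
      have h21 : (2:ℝ) ^ (a.re - 1) * (2⁻¹:ℝ) ^ (a.re - 1) = 1 := by
        rw [← Real.mul_rpow (by norm_num) (by norm_num)]
        norm_num
      rw [show -(2⁻¹*u) = -u/2 by ring]
      linear_combination (Real.exp (-u/2) * u ^ (a.re - 1)) * h21
    exact h2.congr_fun heq measurableSet_Ioi
  · -- pointwise limit
    rw [ae_restrict_iff' measurableSet_Ioi]
    filter_upwards with u hu
    have hu0 : (0:ℝ) < u := hu
    have base : Tendsto (fun x : ℝ => ((((1 - u/x) ^ (x-1) : ℝ)) : ℂ) * (u:ℂ) ^ (a-1))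
        atTop (𝓝 (((Real.exp (-u) : ℝ):ℂ) * (u:ℂ) ^ (a-1))) := by
      exact ((Complex.continuous_ofReal.tendsto _).comp (real_limit u)).mul tendsto_const_nhds
    apply base.congr'
    filter_upwards [eventually_gt_atTop u, eventually_gt_atTop (1:ℝ)] with x hxu hx1
    have hmem : u ∈ Set.Ioc (0:ℝ) x := ⟨hu0, hxu.le⟩
    rw [F, Set.indicator_of_mem hmem]
    have h1 : (0:ℝ) ≤ 1 - u / x := by
      rw [sub_nonneg]
      exact (div_le_one (by linarith)).2 hxu.le
    rw [Complex.ofReal_cpow h1]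
    push_cast
    ring_nf


lemma beta_limit (a : ℂ) (ha : 0 < a.re) :
    Tendsto (fun x : ℝ => (x:ℂ) ^ a * Complex.betaIntegral x a) atTop
      (𝓝 (Complex.Gamma a)) := by
  have h := tendsto_integral_F a ha
  rw [← Complex.Gamma_eq_integral ha] at h
  apply h.congr'
  filter_upwards [eventually_gt_atTop (0:ℝ)] with x hx
  exact integral_F a hx

noncomputable def R (a : ℂ) (x : ℝ) : ℂ :=
  Complex.Gamma ((x:ℂ) + a) / (Complex.Gamma (x:ℂ) * (x:ℂ) ^ a)

lemma base_case (a : ℂ) (ha : 0 < a.re) :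
    Tendsto (R a) atTop (𝓝 1) := by
  have hG : Complex.Gamma a ≠ 0 := Complex.Gamma_ne_zero_of_re_pos ha
  have h := (tendsto_const_nhds (x := Complex.Gamma a)).div (beta_limit a ha) hG
  rw [div_self hG] at h
  apply h.congr'
  filter_upwards [eventually_gt_atTop (0:ℝ)] with x hx
  have hxC : (x:ℂ) ≠ 0 := ofReal_ne_zero.mpr hx.ne'
  have hxre : 0 < ((x:ℂ)).re := by simpa using hx
  have hbeta := Complex.Gamma_mul_Gamma_eq_betaIntegral hxre ha
  have hGx : Complex.Gamma (x:ℂ) ≠ 0 := Complex.Gamma_ne_zero_of_re_pos hxre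
  have hGxa : Complex.Gamma ((x:ℂ) + a) ≠ 0 := by
    apply Complex.Gamma_ne_zero_of_re_pos
    simp only [Complex.add_re, Complex.ofReal_re]
    linarith
  have hB : Complex.betaIntegral x a ≠ 0 := by
    intro h0
    rw [h0, mul_zero] at hbeta
    exact hG (by simpa [hGx] using mul_eq_zero.mp hbeta)
  have hxa : (x:ℂ) ^ a ≠ 0 := by
    simp [Complex.cpow_eq_zero_iff, hxC]
  rw [R]
  simp only [Pi.div_apply]
  field_simp
  linear_combination hbeta

lemma step_down (a : ℂ) (h : Tendsto (R (a + 1)) atTop (𝓝 1)) :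
    Tendsto (R a) atTop (𝓝 1) := by
  have hfrac : Tendsto (fun x : ℝ => ((x:ℂ)) / ((x:ℂ) + a)) atTop (𝓝 1) := by
    have h0 : Tendsto (fun x : ℝ => a / (x:ℂ)) atTop (𝓝 0) := by
      have h00 : Tendsto (fun x : ℝ => ((x⁻¹ : ℝ) : ℂ)) atTop (𝓝 0) := by
        have := (Complex.continuous_ofReal.tendsto 0).comp tendsto_inv_atTop_zero
        simpa [Function.comp_def, Complex.ofReal_inv] using this
      simpa [div_eq_mul_inv, Complex.ofReal_inv, mul_comm] using h00.const_mul a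
    have h1 : Tendsto (fun x : ℝ => 1 + a / (x:ℂ)) atTop (𝓝 1) := by
      simpa using (tendsto_const_nhds (x := (1:ℂ))).add h0
    have h2 := h1.inv₀ one_ne_zero
    rw [inv_one] at h2
    apply h2.congr'
    filter_upwards [eventually_gt_atTop (0:ℝ)] with x hx
    have hxC : (x:ℂ) ≠ 0 := ofReal_ne_zero.mpr hx.ne'
    have hrw : 1 + a / (x:ℂ) = ((x:ℂ) + a) / (x:ℂ) := by field_simp
    rw [hrw, inv_div]
  have hmul := h.mul hfrac
  rw [mul_one] at hmul
  apply hmul.congr'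
  filter_upwards [eventually_gt_atTop (0:ℝ), eventually_gt_atTop |a.re|] with x hx hxa
  have hxC : (x:ℂ) ≠ 0 := ofReal_ne_zero.mpr hx.ne'
  have hxane : (x:ℂ) + a ≠ 0 := by
    intro h0
    have := congrArg Complex.re h0
    simp only [Complex.add_re, Complex.ofReal_re, Complex.zero_re] at this
    linarith [neg_abs_le a.re]
  have hGx : Complex.Gamma (x:ℂ) ≠ 0 :=
    Complex.Gamma_ne_zero_of_re_pos (by simpa using hx)
  have hpa : (x:ℂ) ^ a ≠ 0 := by simp [Complex.cpow_eq_zero_iff, hxC]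
  simp only [R]
  rw [show (x:ℂ) + (a + 1) = ((x:ℂ) + a) + 1 by ring,
    Complex.Gamma_add_one _ hxane, Complex.cpow_add _ _ hxC, Complex.cpow_one]
  field_simp

lemma shift (a : ℂ) : ∀ n : ℕ, Tendsto (R (a + n)) atTop (𝓝 1) → Tendsto (R a) atTop (𝓝 1)
  | 0 => by simpa using id
  | (n+1) => fun h => shift a n (step_down (a + n) (by
      rw [show (a + (n:ℂ)) + 1 = a + ((n+1 : ℕ) : ℂ) by push_cast; ring]
      exact h))

lemma all_case (a : ℂ) : Tendsto (R a) atTop (𝓝 1) := by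
  obtain ⟨n, hn⟩ := exists_nat_gt (-a.re)
  apply shift a n
  apply base_case
  simp only [Complex.add_re, Complex.natCast_re]
  linarith

end Stmt4Aux

open Stmt4Aux in
theorem stmt4 (a b : ℂ) :
    Tendsto (fun x : ℝ =>
        Complex.Gamma ((x : ℂ) + a) / (Complex.Gamma ((x : ℂ) + b) * (x : ℂ) ^ (a - b)))
      atTop (nhds 1) := by
  have h := (all_case a).div (all_case b) one_ne_zero
  rw [div_one] at h
  apply h.congr'
  filter_upwards [eventually_gt_atTop (0:ℝ), eventually_gt_atTop (-b.re)] with x hx hxb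
  have hxC : (x:ℂ) ≠ 0 := ofReal_ne_zero.mpr hx.ne'
  have hGx : Complex.Gamma (x:ℂ) ≠ 0 :=
    Complex.Gamma_ne_zero_of_re_pos (by simpa using hx)
  have hGxb : Complex.Gamma ((x:ℂ) + b) ≠ 0 := by
    apply Complex.Gamma_ne_zero_of_re_pos
    simp only [Complex.add_re, Complex.ofReal_re]
    linarith
  have hpa : (x:ℂ) ^ a ≠ 0 := by simp [Complex.cpow_eq_zero_iff, hxC]
  have hpb : (x:ℂ) ^ b ≠ 0 := by simp [Complex.cpow_eq_zero_iff, hxC]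
  have hpab : (x:ℂ) ^ (a - b) ≠ 0 := by simp [Complex.cpow_eq_zero_iff, hxC]
  have hsplit : (x:ℂ) ^ a = (x:ℂ) ^ (a - b) * (x:ℂ) ^ b := by
    rw [← Complex.cpow_add _ _ hxC]
    ring_nf
  simp only [Pi.div_apply, R]
  rw [hsplit]
  field_simp
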